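/- If X(t,s,x) is a flow of solutions of the ODE γ' = V(t,γ), then for each S ∈ [0,T] and each bounded signed Borel measure μ on ℝ^d, the curve of measures μ_t := (X_S^t)_♯ μ is a solution of the continuity equation ∂_t μ_t + div(V_t μ_t) = 0, meaning that for every C¹ bounded Lipschitz function u : ℝ^d → ℝ the function t ↦ ∫ u dμ_t is absolutely continuous with derivative ∫ du_x(V(t,x)) dμ_t(x). -/

import Mathlib

open MeasureTheory Set
open scoped ENNReal NNReal Topology

noncomputable section

/-- A solution of the ODE `γ' = V(t,γ)` on `[0,T]`, in integral form. -/
def IsSolution {d : ℕ} (T : ℝ) (hT : 0 ≤ T)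
    (V : ℝ → EuclideanSpace ℝ (Fin d) → EuclideanSpace ℝ (Fin d))
    (γ : C(Set.Icc (0:ℝ) T, EuclideanSpace ℝ (Fin d))) : Prop :=
  ∀ t : Set.Icc (0:ℝ) T,
    γ t - γ ⟨0, Set.left_mem_Icc.mpr hT⟩ =
      ∫ s in (0:ℝ)..(t:ℝ), V s (γ (Set.projIcc 0 T hT s))

/-- `X` is a flow of solutions of the ODE. -/
def IsFlow {d : ℕ} (T : ℝ) (hT : 0 ≤ T)
    (V : ℝ → EuclideanSpace ℝ (Fin d) → EuclideanSpace ℝ (Fin d))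
    (X : ℝ → ℝ → EuclideanSpace ℝ (Fin d) → EuclideanSpace ℝ (Fin d)) : Prop :=
  ∀ (t : ℝ) (ht : t ∈ Set.Icc (0:ℝ) T) (x : EuclideanSpace ℝ (Fin d)),
    ∃ γ : C(Set.Icc (0:ℝ) T, EuclideanSpace ℝ (Fin d)),
      IsSolution T hT V γ ∧ γ ⟨t, ht⟩ = x ∧
      (∀ s : Set.Icc (0:ℝ) T, X t s x = γ s) ∧
      (∀ γ' : C(Set.Icc (0:ℝ) T, EuclideanSpace ℝ (Fin d)),
        IsSolution T hT V γ' → γ' ⟨t, ht⟩ = x → γ' = γ)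

/-- Integral of a function against a signed measure, via the Jordan
decomposition. -/
def sInt {d : ℕ} (μ : MeasureTheory.SignedMeasure (EuclideanSpace ℝ (Fin d)))
    (f : EuclideanSpace ℝ (Fin d) → ℝ) : ℝ :=
  (∫ x, f x ∂μ.toJordanDecomposition.posPart) -
    ∫ x, f x ∂μ.toJordanDecomposition.negPart

variable {d : ℕ}

lemma le_of_add_eq_add {α : Type*} [MeasurableSpace α] {p n a b : Measure α}
    (hpn : p.MutuallySingular n) (h : p + b = n + a) : p ≤ a := by
  obtain ⟨A, hA, hpA, hnA⟩ := hpn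
  rw [Measure.le_iff']
  intro s
  have h1 : p s = p (s ∩ Aᶜ) := by
    have := measure_inter_add_diff (μ := p) s hA
    have h0 : p (s ∩ A) = 0 := measure_mono_null inter_subset_right hpA
    have : p (s ∩ A) + p (s \ A) = p s := this
    rw [h0, zero_add] at this
    rw [← Set.diff_eq]
    exact this.symm
  have h2 : n (s ∩ Aᶜ) = 0 := measure_mono_null inter_subset_right hnA
  have h3 : p (s ∩ Aᶜ) + b (s ∩ Aᶜ) = n (s ∩ Aᶜ) + a (s ∩ Aᶜ) := by
    have := congrArg (fun m : Measure α => m (s ∩ Aᶜ)) h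
    simpa using this
  calc p s = p (s ∩ Aᶜ) := h1
    _ ≤ p (s ∩ Aᶜ) + b (s ∩ Aᶜ) := le_self_add
    _ = n (s ∩ Aᶜ) + a (s ∩ Aᶜ) := h3
    _ = a (s ∩ Aᶜ) := by rw [h2, zero_add]
    _ ≤ a s := measure_mono inter_subset_left

lemma map_jordan (μ : SignedMeasure (EuclideanSpace ℝ (Fin d)))
    {f : EuclideanSpace ℝ (Fin d) → EuclideanSpace ℝ (Fin d)} (hf : Measurable f) :
    μ.map f = (μ.toJordanDecomposition.posPart.map f).toSignedMeasure -
      (μ.toJordanDecomposition.negPart.map f).toSignedMeasure := by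
  ext s hs
  rw [VectorMeasure.map_apply _ hf hs, VectorMeasure.sub_apply,
    Measure.toSignedMeasure_apply_measurable hs, Measure.toSignedMeasure_apply_measurable hs,
    map_measureReal_apply hf hs, map_measureReal_apply hf hs]
  conv_lhs => rw [← μ.toSignedMeasure_toJordanDecomposition]
  rw [JordanDecomposition.toSignedMeasure, VectorMeasure.sub_apply,
    Measure.toSignedMeasure_apply_measurable (hf hs),
    Measure.toSignedMeasure_apply_measurable (hf hs)]

lemma jordan_add_eq (ν : SignedMeasure (EuclideanSpace ℝ (Fin d)))
    {a b : Measure (EuclideanSpace ℝ (Fin d))} [IsFiniteMeasure a] [IsFiniteMeasure b]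
    (h : ν = a.toSignedMeasure - b.toSignedMeasure) :
    ν.toJordanDecomposition.posPart + b = ν.toJordanDecomposition.negPart + a := by
  ext s hs
  have h2 := ν.toSignedMeasure_toJordanDecomposition
  have e1 : (ν.toJordanDecomposition.posPart s).toReal - (ν.toJordanDecomposition.negPart s).toReal
      = (a s).toReal - (b s).toReal := by
    have eA := congrArg (fun v : SignedMeasure (EuclideanSpace ℝ (Fin d)) => v s) h2
    have eB := congrArg (fun v : SignedMeasure (EuclideanSpace ℝ (Fin d)) => v s) h
    simp only [JordanDecomposition.toSignedMeasure, VectorMeasure.sub_apply,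
      Measure.toSignedMeasure_apply_measurable hs] at eA eB
    exact eA.trans eB
  have hfin : ∀ (m : Measure (EuclideanSpace ℝ (Fin d))) [IsFiniteMeasure m], m s ≠ ∞ :=
    fun m _ => measure_ne_top m s
  rw [Measure.add_apply, Measure.add_apply]
  have : (ν.toJordanDecomposition.posPart s + b s).toReal
      = (ν.toJordanDecomposition.negPart s + a s).toReal := by
    rw [ENNReal.toReal_add (measure_ne_top _ _) (measure_ne_top _ _),
      ENNReal.toReal_add (measure_ne_top _ _) (measure_ne_top _ _)]
    linarith
  exact (ENNReal.toReal_eq_toReal_iff' (by finiteness) (by finiteness)).mp this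

lemma sInt_eq_of_rep (ν : SignedMeasure (EuclideanSpace ℝ (Fin d)))
    {a b : Measure (EuclideanSpace ℝ (Fin d))} [IsFiniteMeasure a] [IsFiniteMeasure b]
    (h : ν = a.toSignedMeasure - b.toSignedMeasure) {g : EuclideanSpace ℝ (Fin d) → ℝ}
    (hga : Integrable g a) (hgb : Integrable g b) :
    sInt ν g = ∫ x, g x ∂a - ∫ x, g x ∂b := by
  have key := jordan_add_eq ν h
  have hp : ν.toJordanDecomposition.posPart ≤ a :=
    le_of_add_eq_add ν.toJordanDecomposition.mutuallySingular key
  have hn : ν.toJordanDecomposition.negPart ≤ b :=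
    le_of_add_eq_add ν.toJordanDecomposition.mutuallySingular.symm key.symm
  have hgp := hga.mono_measure hp
  have hgn := hgb.mono_measure hn
  have hsum : ∫ x, g x ∂ν.toJordanDecomposition.posPart + ∫ x, g x ∂b
      = ∫ x, g x ∂ν.toJordanDecomposition.negPart + ∫ x, g x ∂a := by
    rw [← integral_add_measure hgp hgb, ← integral_add_measure hgn hga, key]
  unfold sInt
  linarith

lemma sInt_map (μ : SignedMeasure (EuclideanSpace ℝ (Fin d)))
    {f : EuclideanSpace ℝ (Fin d) → EuclideanSpace ℝ (Fin d)} (hf : Measurable f)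
    {g : EuclideanSpace ℝ (Fin d) → ℝ} (hg : Measurable g)
    (hgp : Integrable (fun x => g (f x)) μ.toJordanDecomposition.posPart)
    (hgn : Integrable (fun x => g (f x)) μ.toJordanDecomposition.negPart) :
    sInt (μ.map f) g = (∫ x, g (f x) ∂μ.toJordanDecomposition.posPart) -
      ∫ x, g (f x) ∂μ.toJordanDecomposition.negPart := by
  have h := map_jordan μ hf
  have hmes : AEStronglyMeasurable g (Measure.map f μ.toJordanDecomposition.posPart) :=
    hg.aestronglyMeasurable
  have hmes' : AEStronglyMeasurable g (Measure.map f μ.toJordanDecomposition.negPart) :=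
    hg.aestronglyMeasurable
  have hia : Integrable g (μ.toJordanDecomposition.posPart.map f) :=
    (integrable_map_measure hmes hf.aemeasurable).mpr hgp
  have hib : Integrable g (μ.toJordanDecomposition.negPart.map f) :=
    (integrable_map_measure hmes' hf.aemeasurable).mpr hgn
  rw [sInt_eq_of_rep (μ.map f) h hia hib,
    integral_map hf.aemeasurable hmes, integral_map hf.aemeasurable hmes']

section FTC

variable {T : ℝ} {hT : (0:ℝ) ≤ T}
  {V : ℝ → EuclideanSpace ℝ (Fin d) → EuclideanSpace ℝ (Fin d)}

lemma ftc_along (hT : (0:ℝ) ≤ T)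
    (hV : Measurable (Function.uncurry V))
    (hbound : (∫⁻ t in Set.Icc (0:ℝ) T, ⨆ x, (‖V t x‖₊ : ℝ≥0∞)) < ⊤)
    (γ : C(Set.Icc (0:ℝ) T, EuclideanSpace ℝ (Fin d))) (hγ : IsSolution T hT V γ)
    (u : EuclideanSpace ℝ (Fin d) → ℝ) (hu : ContDiff ℝ 1 u)
    (L : ℝ≥0) (hL : LipschitzWith L u)
    {a b : ℝ} (ha : a ∈ Set.Icc (0:ℝ) T) (hb : b ∈ Set.Icc (0:ℝ) T) :
    u (γ (projIcc 0 T hT b)) - u (γ (projIcc 0 T hT a)) =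
      ∫ σ in a..b, fderiv ℝ u (γ (projIcc 0 T hT σ)) (V σ (γ (projIcc 0 T hT σ))) := by
  -- the velocity along the curve
  set h : ℝ → EuclideanSpace ℝ (Fin d) := fun σ => V σ (γ (projIcc 0 T hT σ)) with hh
  have hmeas_h : Measurable h :=
    hV.comp (measurable_id.prodMk (γ.continuous.comp continuous_projIcc).measurable)
  have hint : IntegrableOn h (Icc 0 T) volume := by
    refine ⟨hmeas_h.aestronglyMeasurable, ?_⟩
    rw [HasFiniteIntegral]
    refine lt_of_le_of_lt (lintegral_mono fun σ => ?_) hbound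
    exact le_iSup (fun x => (‖V σ x‖₊ : ℝ≥0∞)) _
  have hDu : Continuous (fderiv ℝ u) := hu.continuous_fderiv one_ne_zero
  have hDuL : ∀ z, ‖fderiv ℝ u z‖ ≤ L := fun z => norm_fderiv_le_of_lipschitz ℝ hL
  -- curve identity
  have hcurve : ∀ s (hs : s ∈ Icc (0:ℝ) T),
      γ (projIcc 0 T hT s) = γ ⟨0, Set.left_mem_Icc.mpr hT⟩ + ∫ τ in (0:ℝ)..s, h τ := by
    intro s hs
    have := hγ ⟨s, hs⟩
    rw [projIcc_of_mem hT hs]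
    rw [sub_eq_iff_eq_add] at this
    rw [this]; abel
  -- target integrand
  set Fb : ℝ → ℝ := fun σ => fderiv ℝ u (γ (projIcc 0 T hT σ)) (h σ) with hFb
  have hFbmeas : Measurable Fb := by
    have h1 : Measurable fun σ => fderiv ℝ u (γ (projIcc 0 T hT σ)) :=
      (hDu.comp (γ.continuous.comp continuous_projIcc)).measurable
    exact isBoundedBilinearMap_apply.continuous.measurable.comp (h1.prodMk hmeas_h)
  have hFbbd : ∀ σ, ‖Fb σ‖ ≤ (L : ℝ) * ‖h σ‖ := fun σ => by
    calc ‖Fb σ‖ ≤ ‖fderiv ℝ u (γ (projIcc 0 T hT σ))‖ * ‖h σ‖ :=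
          ContinuousLinearMap.le_opNorm _ _
      _ ≤ (L : ℝ) * ‖h σ‖ := by
          gcongr; exact hDuL _
  have hFbint : IntegrableOn Fb (Icc 0 T) volume := by
    refine Integrable.mono (hint.norm.const_mul (L : ℝ)) hFbmeas.aestronglyMeasurable ?_
    refine Filter.Eventually.of_forall fun σ => ?_
    simpa [abs_of_nonneg, mul_nonneg] using
      (hFbbd σ).trans (le_abs_self _)
  -- reduce to the case a ≤ b
  suffices H : ∀ a b : ℝ, a ∈ Icc (0:ℝ) T → b ∈ Icc (0:ℝ) T → a ≤ b →
      u (γ (projIcc 0 T hT b)) - u (γ (projIcc 0 T hT a)) = ∫ σ in a..b, Fb σ by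
    rcases le_total a b with hab | hab
    · exact H a b ha hb hab
    · have := H b a hb ha hab
      rw [intervalIntegral.integral_symm]
      linarith
  clear ha hb a b
  intro a b ha hb hab
  have huIcc : uIcc a b ⊆ Icc (0:ℝ) T := by
    rw [uIcc_of_le hab]; exact Icc_subset_Icc ha.1 hb.2
  -- approximation by continuous functions
  set h' : ℝ → EuclideanSpace ℝ (Fin d) := (Icc (0:ℝ) T).indicator h with hh'
  have hint' : Integrable h' volume := (integrable_indicator_iff measurableSet_Icc).mpr hint
  have hex : ∀ n : ℕ, ∃ g : ℝ → EuclideanSpace ℝ (Fin d), Continuous g ∧ Integrable g volume ∧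
      eLpNorm (h' - g) 1 volume ≤ ENNReal.ofReal (1 / (n + 1)) := by
    intro n
    obtain ⟨g, -, hg1, hg2, hg3⟩ :=
      (memLp_one_iff_integrable.mpr hint').exists_hasCompactSupport_eLpNorm_sub_le
        (by norm_num : (1:ℝ≥0∞) ≠ ∞) (ε := ENNReal.ofReal (1 / (n + 1)))
        (by positivity)
    exact ⟨g, hg2, memLp_one_iff_integrable.mp hg3, hg1⟩
  choose g hgc hgint hgle using hex
  set δ : ℕ → ℝ := fun n => ∫ x, ‖h' x - g n x‖ with hδdef
  have hδ0 : ∀ n, 0 ≤ δ n := fun n => integral_nonneg fun x => norm_nonneg _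
  have hδle : ∀ n, δ n ≤ 1 / (n + 1) := by
    intro n
    have hi : Integrable (fun x => h' x - g n x) volume := hint'.sub (hgint n)
    have := ofReal_integral_norm_eq_lintegral_enorm hi
    have h2 : ENNReal.ofReal (δ n) ≤ ENNReal.ofReal (1 / (n + 1)) := by
      rw [hδdef]; rw [this]
      have := hgle n
      rwa [eLpNorm_one_eq_lintegral_enorm] at this
    rwa [ENNReal.ofReal_le_ofReal_iff (by positivity)] at h2
  have hδlim : Filter.Tendsto δ Filter.atTop (𝓝 0) := by
    refine squeeze_zero hδ0 hδle ?_
    exact_mod_cast tendsto_one_div_add_atTop_nhds_zero_nat (𝕜 := ℝ)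
  -- approximating curves
  set γ0 : EuclideanSpace ℝ (Fin d) := γ ⟨0, Set.left_mem_Icc.mpr hT⟩ with hγ0
  set Γ : ℕ → ℝ → EuclideanSpace ℝ (Fin d) := fun n s => γ0 + ∫ τ in (0:ℝ)..s, g n τ with hΓ
  have hΓd : ∀ n s, HasDerivAt (Γ n) (g n s) s := by
    intro n s
    have : HasDerivAt (fun s => ∫ τ in (0:ℝ)..s, g n τ) (g n s) s := by
      refine intervalIntegral.integral_hasDerivAt_right ((hgc n).intervalIntegrable _ _)
        ?_ (hgc n).continuousAt
      exact (hgc n).stronglyMeasurable.stronglyMeasurableAtFilter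
    simpa [hΓ] using this.const_add γ0
  have hΓcont : ∀ n, Continuous (Γ n) :=
    fun n => continuous_iff_continuousAt.mpr fun s => (hΓd n s).continuousAt
  -- distance between Γ n and γ
  have hclose : ∀ n, ∀ s ∈ Icc (0:ℝ) T, ‖Γ n s - γ (projIcc 0 T hT s)‖ ≤ δ n := by
    intro n s hs
    rw [hcurve s hs]
    have hIcc : Icc (0:ℝ) s ⊆ Icc (0:ℝ) T := Icc_subset_Icc le_rfl hs.2
    have hih : IntervalIntegrable h volume 0 s := by
      apply IntegrableOn.intervalIntegrable
      rw [uIcc_of_le hs.1]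
      exact hint.mono_set hIcc
    have e1 : Γ n s - (γ0 + ∫ τ in (0:ℝ)..s, h τ) =
        ∫ τ in (0:ℝ)..s, (g n τ - h' τ) := by
      rw [hΓ]
      have : (∫ τ in (0:ℝ)..s, (g n τ - h' τ)) =
          (∫ τ in (0:ℝ)..s, g n τ) - ∫ τ in (0:ℝ)..s, h' τ :=
        intervalIntegral.integral_sub ((hgc n).intervalIntegrable _ _)
          (hint'.intervalIntegrable)
      rw [this]
      have h2 : (∫ τ in (0:ℝ)..s, h' τ) = ∫ τ in (0:ℝ)..s, h τ := by
        apply intervalIntegral.integral_congr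
        intro τ hτ
        rw [uIcc_of_le hs.1] at hτ
        exact indicator_of_mem (hIcc hτ) h
      rw [h2]; beta_reduce; abel
    rw [e1]
    calc ‖∫ τ in (0:ℝ)..s, (g n τ - h' τ)‖ ≤ ∫ τ in (0:ℝ)..s, ‖g n τ - h' τ‖ :=
          intervalIntegral.norm_integral_le_integral_norm hs.1
      _ = ∫ τ in Ioc (0:ℝ) s, ‖g n τ - h' τ‖ := intervalIntegral.integral_of_le hs.1
      _ ≤ ∫ τ, ‖g n τ - h' τ‖ := by
          apply setIntegral_le_integral ((hgint n).sub hint').norm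
          exact Filter.Eventually.of_forall fun τ => norm_nonneg _
      _ = δ n := by simp only [hδdef, norm_sub_rev]
  have hΓlim : ∀ s ∈ Icc (0:ℝ) T,
      Filter.Tendsto (fun n => Γ n s) Filter.atTop (𝓝 (γ (projIcc 0 T hT s))) := by
    intro s hs
    have := squeeze_zero_norm (fun n => hclose n s hs) hδlim
    rwa [tendsto_sub_nhds_zero_iff] at this
  -- step n : exact identity for the approximating curves
  have h2 : ∀ n, IntervalIntegrable (fun σ => fderiv ℝ u (Γ n σ) (g n σ)) volume a b :=
    fun n => ((hDu.comp (hΓcont n)).clm_apply (hgc n)).intervalIntegrable _ _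
  have hstep : ∀ n, u (Γ n b) - u (Γ n a) =
      ∫ σ in a..b, fderiv ℝ u (Γ n σ) (g n σ) := by
    intro n
    refine (intervalIntegral.integral_eq_sub_of_hasDerivAt (f := fun s => u (Γ n s)) (fun σ _ => ?_) (h2 n)).symm
    exact (hu.differentiable one_ne_zero (Γ n σ)).hasFDerivAt.comp_hasDerivAt σ (hΓd n σ)
  -- decomposition of the integrand
  set A : ℕ → ℝ → ℝ := fun n σ => fderiv ℝ u (Γ n σ) (g n σ - h σ) with hA
  set B : ℕ → ℝ → ℝ := fun n σ =>
    (fderiv ℝ u (Γ n σ) - fderiv ℝ u (γ (projIcc 0 T hT σ))) (h σ) with hB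
  have hdecomp : ∀ n σ, fderiv ℝ u (Γ n σ) (g n σ) = A n σ + B n σ + Fb σ := by
    intro n σ
    simp only [hA, hB, hFb, map_sub, ContinuousLinearMap.sub_apply]
    ring
  have hBmeas : ∀ n, Measurable (B n) := fun n =>
    isBoundedBilinearMap_apply.continuous.measurable.comp
      ((((hDu.comp (hΓcont n)).sub
          (hDu.comp (γ.continuous.comp continuous_projIcc))).measurable).prodMk hmeas_h)
  have hBbd : ∀ n σ, ‖B n σ‖ ≤ 2 * (L : ℝ) * ‖h σ‖ := by
    intro n σ
    calc ‖B n σ‖ ≤ ‖fderiv ℝ u (Γ n σ) - fderiv ℝ u (γ (projIcc 0 T hT σ))‖ * ‖h σ‖ :=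
          ContinuousLinearMap.le_opNorm _ _
      _ ≤ 2 * (L : ℝ) * ‖h σ‖ := by
          have := (norm_sub_le (fderiv ℝ u (Γ n σ)) (fderiv ℝ u (γ (projIcc 0 T hT σ)))).trans
            (add_le_add (hDuL _) (hDuL _))
          have hn := norm_nonneg (h σ)
          nlinarith
  have hbd_int : IntegrableOn (fun σ => 2 * (L : ℝ) * ‖h σ‖) (uIcc a b) volume :=
    (hint.mono_set huIcc).norm.const_mul _
  have hBint : ∀ n, IntegrableOn (B n) (uIcc a b) volume := by
    intro n
    refine Integrable.mono hbd_int (hBmeas n).aestronglyMeasurable ?_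
    refine Filter.Eventually.of_forall fun σ => ?_
    have := hBbd n σ
    have hn := norm_nonneg (h σ)
    have hL2 : (0:ℝ) ≤ 2 * (L : ℝ) := by positivity
    calc ‖B n σ‖ ≤ 2 * (L : ℝ) * ‖h σ‖ := this
      _ ≤ ‖2 * (L : ℝ) * ‖h σ‖‖ := le_abs_self _
  have hFbii : IntervalIntegrable Fb volume a b := (hFbint.mono_set huIcc).intervalIntegrable
  have hAeq : ∀ n, A n = fun σ => fderiv ℝ u (Γ n σ) (g n σ) - B n σ - Fb σ := by
    intro n; funext σ; have := hdecomp n σ; linarith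
  have hAint : ∀ n, IntervalIntegrable (A n) volume a b := by
    intro n
    rw [hAeq n]
    exact ((h2 n).sub (hBint n).intervalIntegrable).sub hFbii
  have hsplit : ∀ n, (∫ σ in a..b, fderiv ℝ u (Γ n σ) (g n σ)) =
      (∫ σ in a..b, A n σ) + (∫ σ in a..b, B n σ) + ∫ σ in a..b, Fb σ := by
    intro n
    rw [← intervalIntegral.integral_add (hAint n) (hBint n).intervalIntegrable,
      ← intervalIntegral.integral_add ((hAint n).add (hBint n).intervalIntegrable) hFbii]
    exact intervalIntegral.integral_congr fun σ _ => hdecomp n σ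
  -- the A-part tends to zero
  have hAbd : ∀ n, |∫ σ in a..b, A n σ| ≤ (L : ℝ) * δ n := by
    intro n
    have hsub : IntervalIntegrable (fun σ => (L : ℝ) * ‖g n σ - h' σ‖) volume a b :=
      (((hgint n).sub hint').norm.const_mul _).intervalIntegrable
    have step1 : ‖∫ σ in a..b, A n σ‖ ≤ ∫ σ in a..b, ‖A n σ‖ :=
      intervalIntegral.norm_integral_le_integral_norm hab
    have step2 : (∫ σ in a..b, ‖A n σ‖) ≤ ∫ σ in a..b, (L : ℝ) * ‖g n σ - h' σ‖ := by
      refine intervalIntegral.integral_mono_on hab (hAint n).norm hsub fun σ hσ => ?_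
      have hσT : σ ∈ Icc (0:ℝ) T := Icc_subset_Icc ha.1 hb.2 hσ
      have hhh : h' σ = h σ := indicator_of_mem hσT h
      calc ‖A n σ‖ ≤ ‖fderiv ℝ u (Γ n σ)‖ * ‖g n σ - h σ‖ := ContinuousLinearMap.le_opNorm _ _
        _ ≤ (L : ℝ) * ‖g n σ - h σ‖ := by gcongr; exact hDuL _
        _ = (L : ℝ) * ‖g n σ - h' σ‖ := by rw [hhh]
    have step3 : (∫ σ in a..b, (L : ℝ) * ‖g n σ - h' σ‖) ≤ (L : ℝ) * δ n := by
      rw [intervalIntegral.integral_const_mul]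
      have : (∫ σ in a..b, ‖g n σ - h' σ‖) ≤ δ n := by
        rw [intervalIntegral.integral_of_le hab]
        calc (∫ σ in Ioc a b, ‖g n σ - h' σ‖) ≤ ∫ σ, ‖g n σ - h' σ‖ := by
              apply setIntegral_le_integral ((hgint n).sub hint').norm
              exact Filter.Eventually.of_forall fun τ => norm_nonneg _
          _ = δ n := by simp only [hδdef, norm_sub_rev]
      have hL0 : (0:ℝ) ≤ (L : ℝ) := L.coe_nonneg
      exact mul_le_mul_of_nonneg_left this hL0
    calc |∫ σ in a..b, A n σ| = ‖∫ σ in a..b, A n σ‖ := rfl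
      _ ≤ ∫ σ in a..b, ‖A n σ‖ := step1
      _ ≤ ∫ σ in a..b, (L : ℝ) * ‖g n σ - h' σ‖ := step2
      _ ≤ (L : ℝ) * δ n := step3
  have hAlim : Filter.Tendsto (fun n => ∫ σ in a..b, A n σ) Filter.atTop (𝓝 0) := by
    have hb' : Filter.Tendsto (fun n => (L : ℝ) * δ n) Filter.atTop (𝓝 0) := by
      simpa using hδlim.const_mul (L : ℝ)
    exact squeeze_zero_norm hAbd hb'
  -- the B-part tends to zero by dominated convergence
  have hIocT : Ioc a b ⊆ Icc (0:ℝ) T := fun σ hσ =>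
    ⟨ha.1.trans hσ.1.le, hσ.2.trans hb.2⟩
  have hBlim : Filter.Tendsto (fun n => ∫ σ in a..b, B n σ) Filter.atTop (𝓝 0) := by
    have heq : ∀ n, (∫ σ in a..b, B n σ) = ∫ σ in Ioc a b, B n σ := fun n =>
      intervalIntegral.integral_of_le hab
    simp_rw [heq]
    have h0 : (0:ℝ) = ∫ (_ : ℝ) in Ioc a b, (0:ℝ) := by simp
    rw [h0]
    apply tendsto_integral_of_dominated_convergence (fun σ => 2 * (L : ℝ) * ‖h σ‖)
    · exact fun n => (hBmeas n).aestronglyMeasurable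
    · exact (hint.mono_set hIocT).norm.const_mul _
    · intro n
      refine Filter.Eventually.of_forall fun σ => ?_
      exact hBbd n σ
    · rw [ae_restrict_iff' measurableSet_Ioc]
      refine Filter.Eventually.of_forall fun σ hσ => ?_
      have hσT : σ ∈ Icc (0:ℝ) T := hIocT hσ
      have t1 : Filter.Tendsto (fun n => fderiv ℝ u (Γ n σ)
          - fderiv ℝ u (γ (projIcc 0 T hT σ))) Filter.atTop (𝓝 0) := by
        have := ((hDu.tendsto _).comp (hΓlim σ hσT)).sub
          (tendsto_const_nhds (x := fderiv ℝ u (γ (projIcc 0 T hT σ))))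
        simpa using this
      have heval : Continuous (fun φ : EuclideanSpace ℝ (Fin d) →L[ℝ] ℝ => φ (h σ)) :=
        isBoundedBilinearMap_apply.continuous.comp (continuous_id.prodMk continuous_const)
      have := (heval.tendsto _).comp t1
      simpa [hB, Function.comp_def] using this
  -- pass to the limit
  have hRHS : Filter.Tendsto (fun n => ∫ σ in a..b, fderiv ℝ u (Γ n σ) (g n σ))
      Filter.atTop (𝓝 (∫ σ in a..b, Fb σ)) := by
    have : Filter.Tendsto (fun n => (∫ σ in a..b, A n σ) + (∫ σ in a..b, B n σ)
        + ∫ σ in a..b, Fb σ) Filter.atTop (𝓝 (∫ σ in a..b, Fb σ)) := by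
      have := (hAlim.add hBlim).add (tendsto_const_nhds (x := ∫ σ in a..b, Fb σ))
      simpa using this
    exact this.congr fun n => (hsplit n).symm
  have hLHS : Filter.Tendsto (fun n => u (Γ n b) - u (Γ n a)) Filter.atTop
      (𝓝 (u (γ (projIcc 0 T hT b)) - u (γ (projIcc 0 T hT a)))) :=
    ((hu.continuous.tendsto _).comp (hΓlim b hb)).sub
      ((hu.continuous.tendsto _).comp (hΓlim a ha))
  exact tendsto_nhds_unique (hLHS.congr fun n => hstep n) hRHS

end FTC

section Flow

variable {T : ℝ}
  {V : ℝ → EuclideanSpace ℝ (Fin d) → EuclideanSpace ℝ (Fin d)}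
  {X : ℝ → ℝ → EuclideanSpace ℝ (Fin d) → EuclideanSpace ℝ (Fin d)}

lemma exists_good (hT : (0:ℝ) ≤ T)
    (hV : Measurable (Function.uncurry V))
    (hbound : (∫⁻ t in Set.Icc (0:ℝ) T, ⨆ x, (‖V t x‖₊ : ℝ≥0∞)) < ⊤)
    (hX : IsFlow T hT V X)
    (hXmeas : ∀ s t : ℝ, Measurable (X s t))
    {S : ℝ} (hS : S ∈ Set.Icc (0:ℝ) T)
    (u : EuclideanSpace ℝ (Fin d) → ℝ) (hu : ContDiff ℝ 1 u)
    (L : ℝ≥0) (hL : LipschitzWith L u) :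
    ∃ Xc : ℝ → EuclideanSpace ℝ (Fin d) → EuclideanSpace ℝ (Fin d),
      (∀ σ, σ ∈ Icc (0:ℝ) T → ∀ x, Xc σ x = X S σ x) ∧
      Measurable (Function.uncurry Xc) ∧
      (∀ x : EuclideanSpace ℝ (Fin d), ∀ a ∈ Icc (0:ℝ) T, ∀ b ∈ Icc (0:ℝ) T,
        u (Xc b x) - u (Xc a x)
          = ∫ σ in a..b, fderiv ℝ u (Xc σ x) (V σ (Xc σ x))) := by
  choose γof hsol hval hflow huniq using hX S hS
  refine ⟨fun σ x => γof x (projIcc 0 T hT σ), ?_, ?_, ?_⟩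
  · intro σ hσ x
    show (γof x) (projIcc 0 T hT σ) = X S σ x
    rw [← hflow x (projIcc 0 T hT σ)]
    have hc : ((projIcc 0 T hT σ : Icc (0:ℝ) T) : ℝ) = σ := by
      rw [projIcc_of_mem hT hσ]
    rw [hc]
  · apply measurable_uncurry_of_continuous_of_measurable
    · intro x
      exact (γof x).continuous.comp continuous_projIcc
    · intro σ
      have : (fun x => γof x (projIcc 0 T hT σ)) =
          fun x => X S ((projIcc 0 T hT σ : Icc (0:ℝ) T) : ℝ) x := by
        funext x
        exact (hflow x (projIcc 0 T hT σ)).symm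
      rw [this]
      exact hXmeas S _
  · intro x a ha b hb
    exact ftc_along hT hV hbound (γof x) (hsol x) u hu L hL ha hb

lemma prod_integrable
    (hV : Measurable (Function.uncurry V))
    (hbound : (∫⁻ t in Set.Icc (0:ℝ) T, ⨆ x, (‖V t x‖₊ : ℝ≥0∞)) < ⊤)
    {Xc : ℝ → EuclideanSpace ℝ (Fin d) → EuclideanSpace ℝ (Fin d)}
    (hXc : Measurable (Function.uncurry Xc))
    (u : EuclideanSpace ℝ (Fin d) → ℝ) (hu : ContDiff ℝ 1 u)
    (L : ℝ≥0) (hL : LipschitzWith L u)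
    {a b : ℝ} (ha : a ∈ Icc (0:ℝ) T) (hb : b ∈ Icc (0:ℝ) T) (hab : a ≤ b)
    (ν : Measure (EuclideanSpace ℝ (Fin d))) [IsFiniteMeasure ν] :
    Integrable (Function.uncurry (fun σ x => fderiv ℝ u (Xc σ x) (V σ (Xc σ x))))
      ((volume.restrict (Ioc a b)).prod ν) := by
  have hDu : Continuous (fderiv ℝ u) := hu.continuous_fderiv one_ne_zero
  have hDuL : ∀ z, ‖fderiv ℝ u z‖ ≤ L := fun z => norm_fderiv_le_of_lipschitz ℝ hL
  set k : ℝ → EuclideanSpace ℝ (Fin d) → ℝ :=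
    fun σ x => fderiv ℝ u (Xc σ x) (V σ (Xc σ x)) with hk
  have hWmeas : Measurable (fun p : ℝ × EuclideanSpace ℝ (Fin d) =>
      V p.1 (Function.uncurry Xc p)) := hV.comp (measurable_fst.prodMk hXc)
  have hkmeas : Measurable (Function.uncurry k) := by
    have heq : Function.uncurry k =
        (fun q : (EuclideanSpace ℝ (Fin d) →L[ℝ] ℝ) × EuclideanSpace ℝ (Fin d) => q.1 q.2) ∘
          (fun p => (fderiv ℝ u (Function.uncurry Xc p), V p.1 (Function.uncurry Xc p))) := rfl
    rw [heq]
    exact isBoundedBilinearMap_apply.continuous.measurable.comp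
      (((hDu.measurable.comp hXc)).prodMk hWmeas)
  refine ⟨hkmeas.aestronglyMeasurable, ?_⟩
  rw [HasFiniteIntegral]
  rw [lintegral_prod _ hkmeas.enorm.aemeasurable]
  have hpt : ∀ σ x, (‖k σ x‖₊ : ℝ≥0∞) ≤ (L : ℝ≥0∞) * ⨆ z, (‖V σ z‖₊ : ℝ≥0∞) := by
    intro σ x
    have h1 : ‖k σ x‖ ≤ (L : ℝ) * ‖V σ (Xc σ x)‖ := by
      calc ‖k σ x‖ ≤ ‖fderiv ℝ u (Xc σ x)‖ * ‖V σ (Xc σ x)‖ :=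
            ContinuousLinearMap.le_opNorm _ _
        _ ≤ (L : ℝ) * ‖V σ (Xc σ x)‖ := by gcongr; exact hDuL _
    have h2 : (‖k σ x‖₊ : ℝ≥0∞) ≤ (L : ℝ≥0∞) * (‖V σ (Xc σ x)‖₊ : ℝ≥0∞) := by
      rw [← ENNReal.coe_mul]
      exact_mod_cast h1
    exact h2.trans (mul_le_mul_right (le_iSup (fun z => (‖V σ z‖₊ : ℝ≥0∞)) _) _)
  have hinner : ∀ σ, (∫⁻ x, (‖k σ x‖₊ : ℝ≥0∞) ∂ν) ≤
      ((L : ℝ≥0∞) * ⨆ z, (‖V σ z‖₊ : ℝ≥0∞)) * ν univ := by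
    intro σ
    calc (∫⁻ x, (‖k σ x‖₊ : ℝ≥0∞) ∂ν)
        ≤ ∫⁻ _, ((L : ℝ≥0∞) * ⨆ z, (‖V σ z‖₊ : ℝ≥0∞)) ∂ν := lintegral_mono fun x => hpt σ x
      _ = ((L : ℝ≥0∞) * ⨆ z, (‖V σ z‖₊ : ℝ≥0∞)) * ν univ := lintegral_const _
  calc (∫⁻ σ in Ioc a b, ∫⁻ x, (‖Function.uncurry k (σ, x)‖₊ : ℝ≥0∞) ∂ν)
      ≤ ∫⁻ σ in Ioc a b, ((L : ℝ≥0∞) * ν univ) * ⨆ z, (‖V σ z‖₊ : ℝ≥0∞) := by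
        refine lintegral_mono fun σ => ?_
        refine (hinner σ).trans_eq ?_
        ring
    _ = ((L : ℝ≥0∞) * ν univ) * ∫⁻ σ in Ioc a b, ⨆ z, (‖V σ z‖₊ : ℝ≥0∞) :=
        lintegral_const_mul' _ _ (by finiteness)
    _ ≤ ((L : ℝ≥0∞) * ν univ) * ∫⁻ σ in Icc (0:ℝ) T, ⨆ z, (‖V σ z‖₊ : ℝ≥0∞) := by
        gcongr
        intro σ hσ
        exact ⟨ha.1.trans hσ.1.le, hσ.2.trans hb.2⟩
    _ < ⊤ := by
        apply ENNReal.mul_lt_top _ hbound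
        finiteness

end Flow

section Key

variable {T : ℝ}
  {V : ℝ → EuclideanSpace ℝ (Fin d) → EuclideanSpace ℝ (Fin d)}

lemma key_finite
    (hV : Measurable (Function.uncurry V))
    (hbound : (∫⁻ t in Set.Icc (0:ℝ) T, ⨆ x, (‖V t x‖₊ : ℝ≥0∞)) < ⊤)
    {Xc : ℝ → EuclideanSpace ℝ (Fin d) → EuclideanSpace ℝ (Fin d)}
    (hXc : Measurable (Function.uncurry Xc))
    (u : EuclideanSpace ℝ (Fin d) → ℝ) (hu : ContDiff ℝ 1 u)
    (M : ℝ) (hM : ∀ x, |u x| ≤ M)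
    (L : ℝ≥0) (hL : LipschitzWith L u)
    (hftc : ∀ x : EuclideanSpace ℝ (Fin d), ∀ a ∈ Icc (0:ℝ) T, ∀ b ∈ Icc (0:ℝ) T,
      u (Xc b x) - u (Xc a x)
        = ∫ σ in a..b, fderiv ℝ u (Xc σ x) (V σ (Xc σ x)))
    {a b : ℝ} (ha : a ∈ Icc (0:ℝ) T) (hb : b ∈ Icc (0:ℝ) T)
    (ν : Measure (EuclideanSpace ℝ (Fin d))) [IsFiniteMeasure ν] :
    (∫ x, u (Xc b x) ∂ν) - (∫ x, u (Xc a x) ∂ν) =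
      ∫ σ in a..b, ∫ x, fderiv ℝ u (Xc σ x) (V σ (Xc σ x)) ∂ν := by
  have hintu : ∀ c : ℝ, Integrable (fun x => u (Xc c x)) ν := by
    intro c
    have hmeas : Measurable (fun x => u (Xc c x)) :=
      hu.continuous.measurable.comp (hXc.of_uncurry_left)
    refine (integrable_const M).mono' hmeas.aestronglyMeasurable ?_
    exact Filter.Eventually.of_forall fun x => hM _
  suffices H : ∀ a b : ℝ, a ∈ Icc (0:ℝ) T → b ∈ Icc (0:ℝ) T → a ≤ b →
      (∫ x, u (Xc b x) ∂ν) - (∫ x, u (Xc a x) ∂ν) =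
        ∫ σ in a..b, ∫ x, fderiv ℝ u (Xc σ x) (V σ (Xc σ x)) ∂ν by
    rcases le_total a b with hab | hab
    · exact H a b ha hb hab
    · have := H b a hb ha hab
      rw [intervalIntegral.integral_symm]
      linarith
  clear ha hb a b
  intro a b ha hb hab
  have hprod := prod_integrable hV hbound hXc u hu L hL ha hb hab ν
  have hswap : Integrable (Function.uncurry
      (fun (x : EuclideanSpace ℝ (Fin d)) (σ : ℝ) => fderiv ℝ u (Xc σ x) (V σ (Xc σ x))))
      (ν.prod (volume.restrict (Ioc a b))) := hprod.swap
  calc (∫ x, u (Xc b x) ∂ν) - (∫ x, u (Xc a x) ∂ν)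
      = ∫ x, (u (Xc b x) - u (Xc a x)) ∂ν := (integral_sub (hintu b) (hintu a)).symm
    _ = ∫ x, (∫ σ in Ioc a b, fderiv ℝ u (Xc σ x) (V σ (Xc σ x))) ∂ν := by
        refine integral_congr_ae (Filter.Eventually.of_forall fun x => ?_)
        show u (Xc b x) - u (Xc a x) = _
        rw [hftc x a ha b hb, intervalIntegral.integral_of_le hab]
    _ = ∫ σ in Ioc a b, (∫ x, fderiv ℝ u (Xc σ x) (V σ (Xc σ x)) ∂ν) := by
        exact integral_integral_swap hswap
    _ = ∫ σ in a..b, ∫ x, fderiv ℝ u (Xc σ x) (V σ (Xc σ x)) ∂ν :=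
        (intervalIntegral.integral_of_le hab).symm

end Key

/-- if `X` is a flow of solutions of the ODE, then for each
`S ∈ [0,T]` and each bounded signed Borel measure `μ`, the curve
`μ_t := (X_S^t)_♯ μ` solves the continuity equation: for every `C¹`
bounded Lipschitz `u`, `t ↦ ∫ u dμ_t` is absolutely continuous with
derivative `∫ du_x(V(t,x)) dμ_t(x)` (stated in integral form). -/
theorem stmt4 (d : ℕ) (T : ℝ) (hT : 0 ≤ T)
    (V : ℝ → EuclideanSpace ℝ (Fin d) → EuclideanSpace ℝ (Fin d))
    (hV : Measurable (Function.uncurry V))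
    (hbound : (∫⁻ t in Set.Icc (0:ℝ) T, ⨆ x, (‖V t x‖₊ : ℝ≥0∞)) < ⊤)
    (X : ℝ → ℝ → EuclideanSpace ℝ (Fin d) → EuclideanSpace ℝ (Fin d))
    (hX : IsFlow T hT V X)
    (hXmeas : ∀ s t : ℝ, Measurable (X s t))
    (S : ℝ) (hS : S ∈ Set.Icc (0:ℝ) T)
    (μ : MeasureTheory.SignedMeasure (EuclideanSpace ℝ (Fin d))) :
    ∀ u : EuclideanSpace ℝ (Fin d) → ℝ,
      ContDiff ℝ 1 u → (∃ M : ℝ, ∀ x, |u x| ≤ M) →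
      (∃ L : ℝ≥0, LipschitzWith L u) →
      ∀ t ∈ Set.Icc (0:ℝ) T,
        sInt (μ.map (X S t)) u - sInt (μ.map (X S S)) u =
          ∫ σ in S..t, sInt (μ.map (X S σ))
            (fun x => fderiv ℝ u x (V σ x)) := by
  intro u hu hMex hLex t ht
  obtain ⟨M, hM⟩ := hMex
  obtain ⟨L, hL⟩ := hLex
  obtain ⟨Xc, hXceq, hXcmeas, hftc⟩ := exists_good hT hV hbound hX hXmeas hS u hu L hL
  have humeas : Measurable u := hu.continuous.measurable
  set p := μ.toJordanDecomposition.posPart with hp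
  set q := μ.toJordanDecomposition.negPart with hq
  have hintu : ∀ (f : EuclideanSpace ℝ (Fin d) → EuclideanSpace ℝ (Fin d)), Measurable f →
      ∀ (ν : Measure (EuclideanSpace ℝ (Fin d))), IsFiniteMeasure ν →
        Integrable (fun x => u (f x)) ν := by
    intro f hf ν hν
    exact (integrable_const M).mono' (humeas.comp hf).aestronglyMeasurable
      (Filter.Eventually.of_forall fun x => hM _)
  have hL1 : sInt (μ.map (X S t)) u = (∫ x, u (X S t x) ∂p) - ∫ x, u (X S t x) ∂q :=
    sInt_map μ (hXmeas S t) humeas (hintu _ (hXmeas S t) p inferInstance)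
      (hintu _ (hXmeas S t) q inferInstance)
  have hL2 : sInt (μ.map (X S S)) u = (∫ x, u (X S S x) ∂p) - ∫ x, u (X S S x) ∂q :=
    sInt_map μ (hXmeas S S) humeas (hintu _ (hXmeas S S) p inferInstance)
      (hintu _ (hXmeas S S) q inferInstance)
  set m1 := min S t with hm1d
  set m2 := max S t with hm2d
  have hm1 : m1 ∈ Icc (0:ℝ) T := ⟨le_min hS.1 ht.1, (min_le_left _ _).trans hS.2⟩
  have hm2 : m2 ∈ Icc (0:ℝ) T := ⟨hS.1.trans (le_max_left _ _), max_le hS.2 ht.2⟩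
  have hm12 : m1 ≤ m2 := min_le_max
  have hIleq : uIoc S t = Ioc m1 m2 := rfl
  have hIccI : ∀ σ ∈ uIoc S t, σ ∈ Icc (0:ℝ) T := by
    intro σ hσ
    rw [hIleq] at hσ
    exact ⟨hm1.1.trans hσ.1.le, hσ.2.trans hm2.2⟩
  have hprodp := prod_integrable hV hbound hXcmeas u hu L hL hm1 hm2 hm12 p
  have hprodq := prod_integrable hV hbound hXcmeas u hu L hL hm1 hm2 hm12 q
  have haep := hprodp.prod_right_ae
  have haeq := hprodq.prod_right_ae
  rw [ae_restrict_iff' measurableSet_Ioc] at haep haeq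
  have hDu : Continuous (fderiv ℝ u) := hu.continuous_fderiv one_ne_zero
  have hRHS : (∫ σ in S..t, sInt (μ.map (X S σ)) (fun x => fderiv ℝ u x (V σ x))) =
      ∫ σ in S..t, ((∫ x, fderiv ℝ u (Xc σ x) (V σ (Xc σ x)) ∂p)
        - ∫ x, fderiv ℝ u (Xc σ x) (V σ (Xc σ x)) ∂q) := by
    refine intervalIntegral.integral_congr_ae ?_
    filter_upwards [haep, haeq] with σ hp' hq'
    intro hσI
    have hσIcc := hIccI σ hσI
    have hσIoc : σ ∈ Ioc m1 m2 := by rwa [hIleq] at hσI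
    have e : (fun x => fderiv ℝ u (X S σ x) (V σ (X S σ x)))
        = fun x => fderiv ℝ u (Xc σ x) (V σ (Xc σ x)) := by
      funext x
      rw [hXceq σ hσIcc x]
    have hVσ : Measurable (V σ) := hV.comp measurable_prodMk_left
    have hgm : Measurable (fun x => fderiv ℝ u x (V σ x)) := by
      have heq : (fun x => fderiv ℝ u x (V σ x)) =
          (fun z : (EuclideanSpace ℝ (Fin d) →L[ℝ] ℝ) × EuclideanSpace ℝ (Fin d) => z.1 z.2) ∘
            (fun x => (fderiv ℝ u x, V σ x)) := rfl
      rw [heq]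
      exact isBoundedBilinearMap_apply.continuous.measurable.comp
        (hDu.measurable.prodMk hVσ)
    have hip : Integrable (fun x => fderiv ℝ u (X S σ x) (V σ (X S σ x))) p := by
      rw [e]
      exact hp' hσIoc
    have hiq : Integrable (fun x => fderiv ℝ u (X S σ x) (V σ (X S σ x))) q := by
      rw [e]
      exact hq' hσIoc
    rw [sInt_map μ (hXmeas S σ) hgm hip hiq, e]
  have hPk : IntervalIntegrable (fun σ => ∫ x, fderiv ℝ u (Xc σ x) (V σ (Xc σ x)) ∂p)
      volume S t := by
    rw [intervalIntegrable_iff, hIleq]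
    exact hprodp.integral_prod_left
  have hQk : IntervalIntegrable (fun σ => ∫ x, fderiv ℝ u (Xc σ x) (V σ (Xc σ x)) ∂q)
      volume S t := by
    rw [intervalIntegrable_iff, hIleq]
    exact hprodq.integral_prod_left
  have hkeyp := key_finite hV hbound hXcmeas u hu M hM L hL hftc hS ht p
  have hkeyq := key_finite hV hbound hXcmeas u hu M hM L hL hftc hS ht q
  have et : (fun x => u (X S t x)) = fun x => u (Xc t x) := by
    funext x; rw [hXceq t ht x]
  have eS : (fun x => u (X S S x)) = fun x => u (Xc S x) := by
    funext x; rw [hXceq S hS x]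
  rw [hL1, hL2, hRHS, intervalIntegral.integral_sub hPk hQk, et, eS]
  linarith [hkeyp, hkeyq]
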